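/- Let (Ω, F, ℙ, (θ_t)_{t∈ℝ}) be the two-sided canonical Wiener metric dynamical system on Ω = C_0(ℝ, ℝ^m). For fixed τ > 0, every θ_τ-invariant set A ∈ I_τ agrees modulo ℙ-null sets with a set in the remote-future tail σ-algebra T^∞ = ⋂_{t∈ℝ} F_t^∞, i.e., I_τ ⊆ T^∞ mod ℙ. Symmetrically, I_τ ⊆ T_{-∞} mod ℙ where T_{-∞} = ⋂_t F_{-∞}^t. -/

import Mathlib

open MeasureTheory

noncomputable section

/-- Two-sided canonical Wiener path space `C_0(ℝ, ℝ^m)`. -/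
def WienerPath2 (m : ℕ) : Type := {f : C(ℝ, Fin m → ℝ) // f 0 = 0}

instance (m : ℕ) : TopologicalSpace (WienerPath2 m) :=
  instTopologicalSpaceSubtype

instance (m : ℕ) : MeasurableSpace (WienerPath2 m) := borel _

/-- The two-sided Wiener shift `θ_t ω (s) = ω(t+s) - ω(t)`. -/
def wienerShift2 (m : ℕ) (t : ℝ) (ω : WienerPath2 m) : WienerPath2 m :=
  ⟨⟨fun s => ω.1 (t + s) - ω.1 t,
    (ω.1.continuous.comp (continuous_const.add continuous_id)).sub continuous_const⟩,
    by simp⟩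

/-- σ-algebra generated by the increments `W_u - W_v`, `u, v ∈ S`. -/
def incSigma2 (m : ℕ) (S : Set ℝ) : MeasurableSpace (WienerPath2 m) :=
  ⨆ u ∈ S, ⨆ v ∈ S,
    MeasurableSpace.comap (fun ω : WienerPath2 m => ω.1 u - ω.1 v) inferInstance

instance (m : ℕ) : BorelSpace (WienerPath2 m) := ⟨rfl⟩

namespace WienerTailAux

variable {m : ℕ}

lemma le_incSigma2 {S : Set ℝ} {u v : ℝ} (hu : u ∈ S) (hv : v ∈ S) :
    MeasurableSpace.comap (fun ω : WienerPath2 m => ω.1 u - ω.1 v) inferInstance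
      ≤ incSigma2 m S := by
  refine le_trans ?_
    (le_iSup₂ (f := fun u (_ : u ∈ S) => ⨆ v ∈ S,
      MeasurableSpace.comap (fun ω : WienerPath2 m => ω.1 u - ω.1 v) inferInstance) u hu)
  exact le_iSup₂ (f := fun v (_ : v ∈ S) =>
    MeasurableSpace.comap (fun ω : WienerPath2 m => ω.1 u - ω.1 v) inferInstance) v hv

lemma incSigma2_mono {S S' : Set ℝ} (h : S ⊆ S') : incSigma2 m S ≤ incSigma2 m S' :=
  iSup₂_le fun u hu => iSup₂_le fun v hv => le_incSigma2 (h hu) (h hv)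

lemma incSigma2_le (S : Set ℝ) :
    incSigma2 m S ≤ (inferInstance : MeasurableSpace (WienerPath2 m)) := by
  refine iSup₂_le fun u _ => iSup₂_le fun v _ => ?_
  have hc : Continuous (fun ω : WienerPath2 m => ω.1 u - ω.1 v) :=
    ((ContinuousEvalConst.continuous_eval_const u).comp continuous_subtype_val).sub
      ((ContinuousEvalConst.continuous_eval_const v).comp continuous_subtype_val)
  rintro s ⟨t, ht, rfl⟩
  exact hc.measurable ht

lemma inc_comp_shift (t u v : ℝ) :
    (fun ω : WienerPath2 m => ω.1 u - ω.1 v) ∘ wienerShift2 m t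
      = fun ω : WienerPath2 m => ω.1 (t + u) - ω.1 (t + v) := by
  funext ω
  show ((wienerShift2 m t ω).1 u) - ((wienerShift2 m t ω).1 v) = _
  simp only [wienerShift2, ContinuousMap.coe_mk]
  exact sub_sub_sub_cancel_right _ _ _

lemma shift_preimage_mem {t : ℝ} {S : Set ℝ} {C : Set (WienerPath2 m)}
    (hC : MeasurableSet[incSigma2 m S] C) :
    MeasurableSet[incSigma2 m ((fun s => t + s) '' S)] (wienerShift2 m t ⁻¹' C) := by
  have h1 : MeasurableSet[(incSigma2 m S).comap (wienerShift2 m t)]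
      (wienerShift2 m t ⁻¹' C) := ⟨C, hC, rfl⟩
  have hle : (incSigma2 m S).comap (wienerShift2 m t)
      ≤ incSigma2 m ((fun s => t + s) '' S) := by
    rw [incSigma2]
    simp only [MeasurableSpace.comap_iSup, MeasurableSpace.comap_comp]
    refine iSup₂_le fun u hu => iSup₂_le fun v hv => ?_
    rw [inc_comp_shift]
    exact le_incSigma2 ⟨u, hu, rfl⟩ ⟨v, hv, rfl⟩
  exact hle _ h1

lemma shift_shift (s t : ℝ) (ω : WienerPath2 m) :
    wienerShift2 m t (wienerShift2 m s ω) = wienerShift2 m (s + t) ω := by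
  apply Subtype.ext
  apply ContinuousMap.ext
  intro u
  show (ω.1 (s + (t + u)) - ω.1 s) - (ω.1 (s + t) - ω.1 s)
      = ω.1 (s + t + u) - ω.1 (s + t)
  rw [← add_assoc]
  exact sub_sub_sub_cancel_right _ _ _

lemma shift_zero : wienerShift2 m 0 = id := by
  funext ω
  apply Subtype.ext
  apply ContinuousMap.ext
  intro u
  show ω.1 (0 + u) - ω.1 0 = ω.1 u
  rw [zero_add, ω.2, sub_zero]

/-- Key abstract lemma: if `A` can be approximated to accuracy `2⁻¹ ^ j` by sets measurable
w.r.t. `M t` with `t ≥ j`, where `M` is an antitone family of σ-algebras, then `A` agrees mod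
null sets with a set in `⨅ t, M t`. -/
lemma tail_aux {Ω : Type*} [mΩ : MeasurableSpace Ω] (P : Measure Ω)
    (M : ℝ → MeasurableSpace Ω) (hM : Antitone M) (A : Set Ω)
    (happrox : ∀ j : ℕ, ∃ t : ℝ, (j : ℝ) ≤ t ∧ ∃ C : Set Ω,
      MeasurableSet[M t] C ∧ P (symmDiff A C) ≤ 2⁻¹ ^ j) :
    ∃ B : Set Ω, MeasurableSet[⨅ t : ℝ, M t] B ∧ P (symmDiff A B) = 0 := by
  choose t ht C hC hPC using happrox
  set B : Set Ω := ⋂ J : ℕ, ⋃ j : ℕ, C (J + j) with hB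
  have hDanti : Antitone fun J : ℕ => ⋃ j : ℕ, C (J + j) := by
    apply antitone_nat_of_succ_le
    intro J
    refine Set.iUnion_subset fun j => ?_
    have h1 : J + 1 + j = J + (1 + j) := by ring
    rw [h1]
    exact Set.subset_iUnion (fun j => C (J + j)) (1 + j)
  refine ⟨B, ?_, ?_⟩
  · rw [MeasurableSpace.measurableSet_iInf]
    intro s
    have hBeq : B = ⋂ J : ℕ, ⋃ j : ℕ, C (⌈s⌉₊ + J + j) := by
      ext ω
      simp only [hB, Set.mem_iInter, Set.mem_iUnion]
      constructor
      · intro h J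
        exact h (⌈s⌉₊ + J)
      · intro h J
        obtain ⟨j, hj⟩ := h J
        refine ⟨⌈s⌉₊ + j, ?_⟩
        rwa [show J + (⌈s⌉₊ + j) = ⌈s⌉₊ + J + j by ring]
    rw [hBeq]
    refine MeasurableSet.iInter fun J => MeasurableSet.iUnion fun j => ?_
    have hst : s ≤ t (⌈s⌉₊ + J + j) := by
      refine le_trans (le_trans (Nat.le_ceil s) ?_) (ht _)
      exact_mod_cast Nat.cast_le.2 (by omega : ⌈s⌉₊ ≤ ⌈s⌉₊ + J + j)
    exact hM hst _ (hC _)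
  · have key : ∀ J : ℕ, P (symmDiff A B) ≤ 2⁻¹ ^ J * 2 := by
      intro J
      have hsub : symmDiff A B ⊆ ⋃ j : ℕ, symmDiff A (C (J + j)) := by
        intro ω hω
        rw [Set.mem_symmDiff] at hω
        rcases hω with ⟨hA, hBω⟩ | ⟨hBω, hA⟩
        · have hex : ∃ J', ∀ j, ω ∉ C (J' + j) := by
            by_contra h
            push_neg at h
            exact hBω (Set.mem_iInter.2 fun J' => Set.mem_iUnion.2 (h J'))
          obtain ⟨J', hJ'⟩ := hex
          refine Set.mem_iUnion.2 ⟨J', Set.mem_symmDiff.2 (Or.inl ⟨hA, ?_⟩)⟩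
          rw [add_comm J J']
          exact hJ' J
        · obtain ⟨j, hj⟩ := Set.mem_iUnion.1 (Set.mem_iInter.1 hBω J)
          exact Set.mem_iUnion.2 ⟨j, Set.mem_symmDiff.2 (Or.inr ⟨hj, hA⟩)⟩
      calc P (symmDiff A B) ≤ ∑' j : ℕ, P (symmDiff A (C (J + j))) :=
            (measure_mono hsub).trans (measure_iUnion_le _)
        _ ≤ ∑' j : ℕ, (2⁻¹ : ENNReal) ^ (J + j) := ENNReal.tsum_le_tsum fun j => hPC _
        _ = 2⁻¹ ^ J * 2 := by
            simp_rw [pow_add]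
            rw [ENNReal.tsum_mul_left, ENNReal.tsum_geometric,
              ENNReal.one_sub_inv_two, inv_inv]
    have h0 : Filter.Tendsto (fun J : ℕ => (2⁻¹ : ENNReal) ^ J * 2)
        Filter.atTop (nhds 0) := by
      have h1 := ENNReal.tendsto_pow_atTop_nhds_zero_of_lt_one
        (r := (2⁻¹ : ENNReal)) (by rw [ENNReal.inv_lt_one]; exact ENNReal.one_lt_two)
      have h2 := ENNReal.Tendsto.mul_const h1 (Or.inr (ENNReal.ofNat_ne_top (n := 2)))
      simpa using h2
    exact le_antisymm (ge_of_tendsto' h0 key) zero_le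

lemma approx_block (T : ℕ → Set ℝ) (hTmono : Monotone T) (hTcov : ∀ u : ℝ, ∃ n, u ∈ T n)
    (P : Measure (WienerPath2 m)) [IsProbabilityMeasure P]
    (A : Set (WienerPath2 m)) (hA : MeasurableSet[incSigma2 m Set.univ] A) :
    ∀ ε : ℝ, 0 < ε → ∃ n : ℕ, ∃ C : Set (WienerPath2 m),
      MeasurableSet[incSigma2 m (T n)] C ∧ P (symmDiff A C) < ENNReal.ofReal ε := by
  intro ε hε
  have hle' : incSigma2 m Set.univ ≤ (instMeasurableSpaceWienerPath2 m) := incSigma2_le _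
  set 𝒜 : Set (Set (WienerPath2 m)) :=
    {s | ∃ n, MeasurableSet[incSigma2 m (T n)] s} with h𝒜def
  have h𝒜 : IsSetAlgebra 𝒜 := by
    refine ⟨⟨0, @MeasurableSet.empty _ (incSigma2 m (T 0))⟩, ?_, ?_⟩
    · rintro s ⟨n, hs⟩; exact ⟨n, hs.compl⟩
    · rintro s t ⟨n, hs⟩ ⟨n', ht⟩
      exact ⟨max n n', (incSigma2_mono (hTmono (le_max_left n n')) _ hs).union
        (incSigma2_mono (hTmono (le_max_right n n')) _ ht)⟩
  have hgen : incSigma2 m Set.univ = MeasurableSpace.generateFrom 𝒜 := by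
    apply le_antisymm
    · refine iSup₂_le fun u _ => iSup₂_le fun v _ => ?_
      obtain ⟨n₁, hn₁⟩ := hTcov u
      obtain ⟨n₂, hn₂⟩ := hTcov v
      have h1 : MeasurableSpace.comap (fun ω : WienerPath2 m => ω.1 u - ω.1 v) inferInstance
          ≤ incSigma2 m (T (max n₁ n₂)) :=
        le_incSigma2 (hTmono (le_max_left n₁ n₂) hn₁) (hTmono (le_max_right n₁ n₂) hn₂)
      refine h1.trans ?_
      intro s hs
      exact MeasurableSpace.measurableSet_generateFrom ⟨max n₁ n₂, hs⟩
    · exact MeasurableSpace.generateFrom_le fun s hs => by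
        obtain ⟨n, hn⟩ := hs
        exact incSigma2_mono (Set.subset_univ _) _ hn
  haveI hfin : IsFiniteMeasure (P.trim hle') := isFiniteMeasure_trim hle'
  have hdense := Measure.MeasureDense.of_generateFrom_isSetAlgebra_finite
    (X := WienerPath2 m) (m := incSigma2 m Set.univ) (μ := P.trim hle') h𝒜 hgen
  have hfinA : P.trim hle' A ≠ ⊤ := by
    exact measure_ne_top _ _
  obtain ⟨C, hC𝒜, hC⟩ := @Measure.MeasureDense.approx _ (incSigma2 m Set.univ)
    (P.trim hle') 𝒜 hdense A hA hfinA ε hε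
  obtain ⟨n, hCn⟩ := hC𝒜
  refine ⟨n, C, hCn, ?_⟩
  rwa [trim_measurableSet_eq hle'
    (hA.symmDiff (incSigma2_mono (Set.subset_univ _) _ hCn))] at hC

end WienerTailAux

open WienerTailAux

/-- On the two-sided canonical Wiener space, every `θ_τ`-invariant measurable set agrees
mod `ℙ` with a set in the remote-future tail σ-algebra `T^∞ = ⋂_t F_t^∞`, and likewise with
a set in the remote-past tail σ-algebra `T_{-∞} = ⋂_t F_{-∞}^t`. -/
theorem wiener_shift_invariant_agrees_with_tail_set
    (m : ℕ) (τ : ℝ) (hτ : 0 < τ)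
    (P : Measure (WienerPath2 m)) [IsProbabilityMeasure P]
    (hMP : ∀ t : ℝ, MeasurePreserving (wienerShift2 m t) P P)
    (hGauss : ∀ (i : Fin m) (u v : ℝ),
      Measure.map (fun ω : WienerPath2 m => (ω.1 u - ω.1 v) i) P =
        ProbabilityTheory.gaussianReal 0 (Real.nnabs (u - v)))
    (hIndep : ∀ (n : ℕ) (t : Fin (n + 1) → ℝ), Monotone t →
      ProbabilityTheory.iIndepFun (m := fun _ : Fin n => (inferInstance : MeasurableSpace (Fin m → ℝ)))
        (fun (k : Fin n) (ω : WienerPath2 m) => ω.1 (t k.succ) - ω.1 (t k.castSucc)) P) :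
    ∀ A : Set (WienerPath2 m),
      MeasurableSet[incSigma2 m Set.univ] A →
      wienerShift2 m τ ⁻¹' A = A →
      (∃ B : Set (WienerPath2 m),
        MeasurableSet[⨅ t : ℝ, incSigma2 m (Set.Ici t)] B ∧ P (symmDiff A B) = 0) ∧
      (∃ B : Set (WienerPath2 m),
        MeasurableSet[⨅ t : ℝ, incSigma2 m (Set.Iic t)] B ∧ P (symmDiff A B) = 0) := by
  intro A hA hAinv
  have hAm : MeasurableSet A := incSigma2_le Set.univ _ hA
  have hinv_pos : ∀ k : ℕ, wienerShift2 m (k * τ) ⁻¹' A = A := by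
    intro k
    induction k with
    | zero => simp [shift_zero]
    | succ k ih =>
      have hcomp : wienerShift2 m ((k + 1 : ℕ) * τ)
          = wienerShift2 m τ ∘ wienerShift2 m (k * τ) := by
        funext ω
        rw [Function.comp_apply, shift_shift]
        congr 1
        push_cast
        ring
      rw [hcomp, Set.preimage_comp, hAinv, ih]
  have hinv_neg : ∀ k : ℕ, wienerShift2 m (-(k * τ)) ⁻¹' A = A := by
    intro k
    have hcomp : wienerShift2 m (k * τ) ∘ wienerShift2 m (-(k * τ)) = id := by
      funext ω
      rw [Function.comp_apply, shift_shift, neg_add_cancel, shift_zero]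
    calc wienerShift2 m (-(k * τ)) ⁻¹' A
        = wienerShift2 m (-(k * τ)) ⁻¹' (wienerShift2 m (k * τ) ⁻¹' A) := by
          rw [hinv_pos k]
      _ = (wienerShift2 m (k * τ) ∘ wienerShift2 m (-(k * τ))) ⁻¹' A :=
          (Set.preimage_comp).symm
      _ = A := by rw [hcomp, Set.preimage_id]
  have hofReal : ∀ j : ℕ, ENNReal.ofReal ((2⁻¹ : ℝ) ^ j) = (2⁻¹ : ENNReal) ^ j := by
    intro j
    rw [ENNReal.ofReal_pow (by norm_num), ENNReal.ofReal_inv_of_pos (by norm_num)]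
    norm_num
  constructor
  · refine tail_aux P (fun t => incSigma2 m (Set.Ici t))
      (fun a b hab => incSigma2_mono (Set.Ici_subset_Ici.2 hab)) A ?_
    intro j
    obtain ⟨n, C, hCn, hC⟩ := approx_block (fun n => Set.Ici (-(n : ℝ)))
      (fun a b hab => Set.Ici_subset_Ici.2 (neg_le_neg (Nat.cast_le.2 hab)))
      (fun u => by
        obtain ⟨n, hn⟩ := exists_nat_ge (-u)
        exact ⟨n, Set.mem_Ici.2 (neg_le.1 hn)⟩)
      P A hA ((2⁻¹ : ℝ) ^ j) (by positivity)
    obtain ⟨k, hk⟩ := exists_nat_ge (((j : ℝ) + n) / τ)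
    have hk' : (j : ℝ) + n ≤ k * τ := by
      rw [div_le_iff₀ hτ] at hk
      linarith
    refine ⟨k * τ + -(n : ℝ), by linarith, wienerShift2 m (k * τ) ⁻¹' C, ?_, ?_⟩
    · have h1 := shift_preimage_mem (t := (k : ℝ) * τ) hCn
      rwa [Set.image_const_add_Ici] at h1
    · have hpre : wienerShift2 m (k * τ) ⁻¹' (symmDiff A C)
          = symmDiff A (wienerShift2 m (k * τ) ⁻¹' C) := by
        rw [Set.preimage_symmDiff, hinv_pos k]
      have h2 := (hMP (k * τ)).measure_preimage
        ((hAm.symmDiff (incSigma2_le _ _ hCn)).nullMeasurableSet)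
      rw [hpre] at h2
      rw [h2]
      exact le_trans hC.le (le_of_eq (hofReal j))
  · have hmain := tail_aux P (fun t => incSigma2 m (Set.Iic (-t)))
      (fun a b hab => incSigma2_mono (Set.Iic_subset_Iic.2 (neg_le_neg hab))) A ?_
    · obtain ⟨B, hBmeas, hBP⟩ := hmain
      refine ⟨B, ?_, hBP⟩
      rw [MeasurableSpace.measurableSet_iInf] at hBmeas ⊢
      intro t
      have h1 := hBmeas (-t)
      rwa [neg_neg] at h1
    · intro j
      obtain ⟨n, C, hCn, hC⟩ := approx_block (fun n => Set.Iic (n : ℝ))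
        (fun a b hab => Set.Iic_subset_Iic.2 (Nat.cast_le.2 hab))
        (fun u => by
          obtain ⟨n, hn⟩ := exists_nat_ge u
          exact ⟨n, Set.mem_Iic.2 hn⟩)
        P A hA ((2⁻¹ : ℝ) ^ j) (by positivity)
      obtain ⟨k, hk⟩ := exists_nat_ge (((j : ℝ) + n) / τ)
      have hk' : (j : ℝ) + n ≤ k * τ := by
        rw [div_le_iff₀ hτ] at hk
        linarith
      refine ⟨k * τ - n, by linarith, wienerShift2 m (-(k * τ)) ⁻¹' C, ?_, ?_⟩
      · have h1 := shift_preimage_mem (t := -((k : ℝ) * τ)) hCn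
        rw [Set.image_const_add_Iic] at h1
        rwa [show -((k : ℝ) * τ) + n = -((k : ℝ) * τ - n) by ring] at h1
      · have hpre : wienerShift2 m (-(k * τ)) ⁻¹' (symmDiff A C)
            = symmDiff A (wienerShift2 m (-(k * τ)) ⁻¹' C) := by
          rw [Set.preimage_symmDiff, hinv_neg k]
        have h2 := (hMP (-(k * τ))).measure_preimage
          ((hAm.symmDiff (incSigma2_le _ _ hCn)).nullMeasurableSet)
        rw [hpre] at h2
        rw [h2]
        exact le_trans hC.le (le_of_eq (hofReal j))


end
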